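/- Let a ≥ 2 and r, s be positive integers with r ≥ 1. If a^r − 1 divides (a^s − 1)^2, then r divides s. -/

import Mathlib

/-- The gcd of `a^r - 1` and `a^s - 1` divides `a^(gcd r s) - 1`. -/
lemma gcd_pow_sub_one_dvd (a : ℕ) (ha : 1 ≤ a) : ∀ r s : ℕ,
    Nat.gcd (a ^ r - 1) (a ^ s - 1) ∣ a ^ Nat.gcd r s - 1 := by
  intro r
  induction r using Nat.strong_induction_on with
  | _ r IH =>
    intro s
    rcases Nat.eq_zero_or_pos r with hr0 | hr0
    · subst hr0; simp
    · have hgr : Nat.gcd r s = Nat.gcd (s % r) r := by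
        rw [Nat.gcd_rec r s, Nat.gcd_comm]
      set g := Nat.gcd (a ^ r - 1) (a ^ s - 1) with hg
      have hg1 : g ∣ a ^ r - 1 := Nat.gcd_dvd_left _ _
      have hg2 : g ∣ a ^ s - 1 := Nat.gcd_dvd_right _ _
      have hdecomp : g ∣ a ^ (s % r) - 1 := by
        have hd1 : g ∣ a ^ (r * (s / r)) - 1 := by
          refine hg1.trans ?_
          have := Nat.sub_dvd_pow_sub_pow (a ^ r) 1 (s / r)
          simpa [one_pow, ← pow_mul] using this
        have hd2 : g ∣ a ^ (s % r) * (a ^ (r * (s / r)) - 1) := Dvd.dvd.mul_left hd1 _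
        have hmul : a ^ (s % r) * a ^ (r * (s / r)) = a ^ s := by
          rw [← pow_add]; congr 1; exact Nat.mod_add_div s r
        have hX : 1 ≤ a ^ (s % r) := Nat.one_le_pow _ _ ha
        have hle : a ^ (s % r) ≤ a ^ s := Nat.pow_le_pow_right ha (Nat.mod_le s r)
        have key : (a ^ s - 1) - a ^ (s % r) * (a ^ (r * (s / r)) - 1) = a ^ (s % r) - 1 := by
          rw [Nat.mul_sub, mul_one, hmul]; omega
        have := Nat.dvd_sub hg2 hd2
        rwa [key] at this
      rw [hgr]
      exact (Nat.dvd_gcd hdecomp hg1).trans (IH (s % r) (Nat.mod_lt s hr0) r)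

/-- if `a ≥ 2`, `r, s ≥ 1` and `a^r − 1` divides `(a^s − 1)^2`,
then `r` divides `s`. -/
theorem stmt7 (a r s : ℕ) (ha : 2 ≤ a) (hr : 1 ≤ r) (hs : 1 ≤ s)
    (h : (a ^ r - 1) ∣ (a ^ s - 1) ^ 2) : r ∣ s := by
  set d := Nat.gcd r s with hd
  have hd1 : 1 ≤ d := Nat.gcd_pos_of_pos_left s hr
  have hdr : d ∣ r := Nat.gcd_dvd_left r s
  have hds : d ∣ s := Nat.gcd_dvd_right r s
  -- a^r - 1 divides (a^d - 1)^2
  have hgd : Nat.gcd (a ^ r - 1) (a ^ s - 1) ∣ a ^ d - 1 :=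
    gcd_pow_sub_one_dvd a (by omega) r s
  have hdvd : (a ^ r - 1) ∣ (a ^ d - 1) ^ 2 := by
    have h1 : (a ^ r - 1) ∣ Nat.gcd (a ^ r - 1) ((a ^ s - 1) * (a ^ s - 1)) := by
      apply Nat.dvd_gcd dvd_rfl
      rwa [← sq]
    have h2 : Nat.gcd (a ^ r - 1) ((a ^ s - 1) * (a ^ s - 1)) ∣
        Nat.gcd (a ^ r - 1) (a ^ s - 1) * Nat.gcd (a ^ r - 1) (a ^ s - 1) :=
      Nat.gcd_mul_right_dvd_mul_gcd _ _ _
    calc (a ^ r - 1) ∣ _ := h1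
      _ ∣ _ := h2
      _ ∣ (a ^ d - 1) * (a ^ d - 1) := mul_dvd_mul hgd hgd
      _ = (a ^ d - 1) ^ 2 := (sq _).symm
  -- size argument: r < 2 * d
  have had : 2 ≤ a ^ d := le_trans ha (Nat.le_self_pow (by omega) a)
  have har : 1 ≤ a ^ r := Nat.one_le_pow _ _ (by omega)
  have hpos : 0 < (a ^ d - 1) ^ 2 := by
    have : 0 < a ^ d - 1 := by omega
    exact pow_pos this 2
  have hle : a ^ r - 1 ≤ (a ^ d - 1) ^ 2 := Nat.le_of_dvd hpos hdvd
  have hsq : (a ^ d - 1) ^ 2 + 1 < a ^ d * a ^ d := by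
    obtain ⟨z, hz⟩ : ∃ z, a ^ d = z + 2 := ⟨a ^ d - 2, by omega⟩
    rw [hz]
    have : (z + 2 - 1) ^ 2 = (z + 1) * (z + 1) := by rw [sq]; congr 1 <;> omega
    rw [this]; nlinarith
  have hlt : a ^ r < a ^ (2 * d) := by
    have h2d : a ^ (2 * d) = a ^ d * a ^ d := by rw [two_mul, pow_add]
    omega
  have hr2d : r < 2 * d := by
    exact (Nat.pow_lt_pow_iff_right (by omega : 1 < a)).mp hlt
  obtain ⟨k, hk⟩ := hdr
  have hk1 : k = 1 := by
    rcases k with _ | _ | k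
    · simp at hk; omega
    · rfl
    · exfalso
      have : 2 * d ≤ r := by rw [hk]; nlinarith
      omega
  rw [hk, hk1, mul_one]
  exact hds
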